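/- There exists a polynomial p(t) ∈ ℤ[t] of degree μ̃_n with constant term p(0) = 1 such that, in the field ℚ(t) of rational functions, p(t) = ∏_{i=0}^{n} (1 − t^{d_i})^{(−1)^{n−i}}; that is, the rational function φ_n(t) := ∏_{i=0}^{n} (1 − t^{d_i})^{(−1)^{n−i}} is a polynomial of degree μ̃_n with integer coefficients and constant term 1. -/
import Mathlib


open Finset Matrix Polynomial FreeAbelianGroup

/-- `d k = a 1 * a 2 * ⋯ * a k`, with `d 0 = 1`. -/
def chainD (a : ℕ → ℕ) (k : ℕ) : ℕ := ∏ i ∈ Finset.Icc 1 k, a i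

/-- `μ̃ 0 = 1`, `μ̃ k = d k - μ̃ (k-1)`. -/
def chainMu (a : ℕ → ℕ) : ℕ → ℤ
  | 0 => 1
  | k + 1 => (chainD a (k + 1) : ℤ) - chainMu a k

/-- `φ_n(t) = ∏_{i=0}^{n} (1 - t^{d_i})^{(-1)^{n-i}}` as a rational function over `ℚ`. -/
noncomputable def chainPhi (a : ℕ → ℕ) (n : ℕ) : RatFunc ℚ :=
  ∏ i ∈ Finset.range (n + 1),
    ((1 : RatFunc ℚ) - RatFunc.X ^ (chainD a i)) ^ ((-1 : ℤ) ^ (n - i))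

/-- the regular nilpotent `μ × μ` matrix -/
def nilpN (μ : ℕ) : Matrix (Fin μ) (Fin μ) ℚ :=
  Matrix.of fun i j => if (j : ℕ) = (i : ℕ) + 1 then 1 else 0

/-- `χ = ∑_{i=0}^{μ-1} c_i N^i` -/
noncomputable def chiMat (μ : ℕ) (c : ℕ → ℚ) : Matrix (Fin μ) (Fin μ) ℚ :=
  ∑ i ∈ Finset.range μ, c i • (nilpN μ) ^ i

/-- the companion-type matrix `M₁`: `(M₁)_{i,1} = -c'_i`, `(M₁)_{i,i+1} = 1` (1-based). -/
def M1mat (μ : ℕ) (c' : ℕ → ℚ) : Matrix (Fin μ) (Fin μ) ℚ :=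
  Matrix.of fun i j =>
    (if (j : ℕ) = 0 then -c' ((i : ℕ) + 1) else 0) +
    (if (j : ℕ) = (i : ℕ) + 1 then 1 else 0)

lemma chainD_succ (a : ℕ → ℕ) (k : ℕ) : chainD a (k+1) = chainD a k * a (k+1) := by
  unfold chainD
  rw [Finset.prod_Icc_succ_top (Nat.le_add_left 1 k)]

lemma chainPhi_succ (a : ℕ → ℕ) (k : ℕ) :
    chainPhi a (k+1)
      = ((1 : RatFunc ℚ) - RatFunc.X ^ (chainD a (k+1))) * (chainPhi a k)⁻¹ := by
  unfold chainPhi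
  rw [Finset.prod_range_succ, Nat.sub_self, pow_zero, zpow_one, mul_comm]
  congr 1
  rw [← Finset.prod_inv_distrib]
  refine Finset.prod_congr rfl fun i hi => ?_
  rw [Finset.mem_range] at hi
  have h : k + 1 - i = (k - i) + 1 := by omega
  rw [h, pow_succ, mul_neg_one, _root_.zpow_neg]

lemma natDegree_one_sub_X_pow (d : ℕ) (hd : 1 ≤ d) :
    ((1 : Polynomial ℤ) - X ^ d).natDegree = d := by
  have h : ((1 : Polynomial ℤ) - X ^ d) = -(X ^ d - C 1) := by
    rw [_root_.map_one, neg_sub]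
  rw [h, natDegree_neg, natDegree_X_pow_sub_C]

lemma one_sub_X_pow_ne_zero (d : ℕ) (hd : 1 ≤ d) :
    ((1 : Polynomial ℤ) - X ^ d) ≠ 0 := by
  intro h
  have := natDegree_one_sub_X_pow d hd
  rw [h, natDegree_zero] at this
  omega

lemma coeff_zero_one_sub_X_pow (d : ℕ) (hd : 1 ≤ d) :
    ((1 : Polynomial ℤ) - X ^ d).coeff 0 = 1 := by
  have : d ≠ 0 := by omega
  simp [coeff_X_pow, this, Ne.symm this]

lemma one_sub_X_pow_dvd (b m : ℕ) :
    ((1 : Polynomial ℤ) - X ^ b) ∣ (1 - X ^ (b * m)) := by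
  have := sub_dvd_pow_sub_pow (1 : Polynomial ℤ) (X ^ b) m
  simpa [← pow_mul] using this

/-- there exists `p(t) ∈ ℤ[t]` of degree `μ̃_n` with `p(0) = 1` such that,
in `ℚ(t)`, `p(t) = ∏_{i=0}^{n} (1 − t^{d_i})^{(−1)^{n−i}}`. -/
theorem stmt_5 (n : ℕ) (hn : 1 ≤ n) (a : ℕ → ℕ) (ha : ∀ i, 1 ≤ i → i ≤ n → 2 ≤ a i) :
    ∃ p : Polynomial ℤ,
      p.natDegree = (chainMu a n).toNat ∧
      p.coeff 0 = 1 ∧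
      algebraMap (Polynomial ℚ) (RatFunc ℚ) (p.map (Int.castRingHom ℚ)) = chainPhi a n := by
  -- basic numeric facts
  have hD : ∀ k, k ≤ n → 1 ≤ chainD a k := by
    intro k hk
    apply Finset.one_le_prod'
    intro i hi
    rw [Finset.mem_Icc] at hi
    exact le_trans (by norm_num) (ha i hi.1 (le_trans hi.2 hk))
  have hDmono : ∀ k, k + 1 ≤ n → 2 * chainD a k ≤ chainD a (k+1) := by
    intro k hk
    rw [chainD_succ, mul_comm]
    exact Nat.mul_le_mul_left _ (ha (k+1) (by omega) hk)
  have hMu : ∀ k, k ≤ n → 1 ≤ chainMu a k ∧ chainMu a k ≤ chainD a k := by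
    intro k
    induction k with
    | zero => intro _; simp [chainMu, chainD]
    | succ k ih =>
      intro hk
      obtain ⟨h1, h2⟩ := ih (by omega)
      have h3 := hDmono k hk
      have h4 := hD k (by omega)
      simp only [chainMu]
      constructor <;> push_cast <;> omega
  -- injectivity of the map `ℤ[X] → ℚ(t)`
  have hinj : Function.Injective
      (fun p : Polynomial ℤ =>
        algebraMap (Polynomial ℚ) (RatFunc ℚ) (p.map (Int.castRingHom ℚ))) := by
    intro p q h
    exact Polynomial.map_injective _ Int.cast_injective
      (RatFunc.algebraMap_injective ℚ h)
  have hmap : ∀ d : ℕ,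
      algebraMap (Polynomial ℚ) (RatFunc ℚ)
        (((1 : Polynomial ℤ) - X ^ d).map (Int.castRingHom ℚ))
        = (1 : RatFunc ℚ) - RatFunc.X ^ d := by
    intro d
    simp [Polynomial.map_sub, Polynomial.map_pow, RatFunc.algebraMap_X]
  -- main induction
  have key : ∀ k, k ≤ n → ∃ p : Polynomial ℤ,
      p.natDegree = (chainMu a k).toNat ∧
      p.coeff 0 = 1 ∧
      algebraMap (Polynomial ℚ) (RatFunc ℚ) (p.map (Int.castRingHom ℚ)) = chainPhi a k ∧
      p ∣ ((1 : Polynomial ℤ) - X ^ (chainD a k)) := by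
    intro k
    induction k with
    | zero =>
      intro _
      have h0 : chainD a 0 = 1 := by simp [chainD]
      refine ⟨1 - X, ?_, by simp, ?_, by rw [h0, pow_one]⟩
      · rw [show ((1 : Polynomial ℤ) - X) = 1 - X ^ 1 by rw [pow_one]]
        rw [natDegree_one_sub_X_pow 1 le_rfl]
        simp [chainMu]
      · unfold chainPhi
        rw [Finset.prod_range_one, Nat.sub_self, pow_zero, zpow_one, h0, pow_one]
        simp [Polynomial.map_sub, RatFunc.algebraMap_X]
    | succ k ih =>
      intro hk
      obtain ⟨p, hdeg, hc0, hF, hdvd⟩ := ih (by omega)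
      have hd1 : 1 ≤ chainD a (k+1) := hD (k+1) hk
      have hdk : 1 ≤ chainD a k := hD k (by omega)
      -- divisibility chain
      have hdvd2 : ((1 : Polynomial ℤ) - X ^ (chainD a k)) ∣ (1 - X ^ (chainD a (k+1))) := by
        rw [chainD_succ]
        exact one_sub_X_pow_dvd _ _
      obtain ⟨r, hr⟩ := hdvd.trans hdvd2
      have hp0 : p ≠ 0 := fun h => by simp [h] at hc0
      have hbig : ((1 : Polynomial ℤ) - X ^ (chainD a (k+1))) ≠ 0 :=
        one_sub_X_pow_ne_zero _ hd1
      have hr0 : r ≠ 0 := fun h => by rw [h, mul_zero] at hr; exact hbig hr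
      -- degree
      have hdeg' : p.natDegree + r.natDegree = chainD a (k+1) := by
        rw [← natDegree_mul hp0 hr0, ← hr, natDegree_one_sub_X_pow _ hd1]
      have hrdeg : r.natDegree = (chainMu a (k+1)).toNat := by
        obtain ⟨h1, h2⟩ := hMu k (by omega)
        have h3 := hDmono k hk
        simp only [chainMu]
        omega
      -- constant coefficient
      have hrc0 : r.coeff 0 = 1 := by
        have h := congrArg (fun q => Polynomial.coeff q 0) hr
        simp only [Polynomial.mul_coeff_zero, coeff_zero_one_sub_X_pow _ hd1, hc0, one_mul] at h
        exact h.symm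
      -- the rational function identity
      have hphik_ne : chainPhi a k ≠ 0 := by
        rw [← hF]
        intro h
        exact hp0 (hinj (by simpa using h))
      have hFr : algebraMap (Polynomial ℚ) (RatFunc ℚ) (r.map (Int.castRingHom ℚ))
          = chainPhi a (k+1) := by
        have hmul : chainPhi a k *
            algebraMap (Polynomial ℚ) (RatFunc ℚ) (r.map (Int.castRingHom ℚ))
            = (1 : RatFunc ℚ) - RatFunc.X ^ (chainD a (k+1)) := by
          rw [← hF, ← _root_.map_mul, ← Polynomial.map_mul, ← hr, hmap]
        rw [chainPhi_succ, ← hmul, mul_comm (chainPhi a k), mul_assoc,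
          mul_inv_cancel₀ hphik_ne, mul_one]
      exact ⟨r, hrdeg, hrc0, hFr, ⟨p, by rw [hr]; ring⟩⟩
  obtain ⟨p, h1, h2, h3, _⟩ := key n le_rfl
  exact ⟨p, h1, h2, h3⟩
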